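/- (Per-object consistency, formal content of the Consistency theorem: no double spend.) In the Byzcuit object transition system, along any finite execution starting from Active s0 (a finite list of labeled steps each related by Step), at most one step carries a commit label. Equivalently, there do not exist two (possibly distinct) transactions T1 and T2 such that the same object is committed by both in a single execution; in particular, no two conflicting transactions sharing the object as input are both committed. -/
import Mathlib

/-- States of the life cycle of a single Byzcuit object. -/
inductive ObjState : Type where
  | Active : ℕ → ObjState
  | Locked : ℕ → ℕ → ObjState
  | Inactive : ℕ → ObjState
deriving DecidableEq

/-- Labels of the transitions: lock, commit and abort, each carrying a
transaction `T` and a transaction sequence number `sT`. -/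
inductive Label : Type where
  | lock : ℕ → ℕ → Label
  | commit : ℕ → ℕ → Label
  | abort : ℕ → ℕ → Label
deriving DecidableEq

/-- The step relation of the Byzcuit object transition system, generated by
exactly three rules. -/
inductive Step : ObjState → Label → ObjState → Prop where
  | lock {s T sT : ℕ} (h : sT ≥ s) :
      Step (.Active s) (.lock T sT) (.Locked T sT)
  | commit {T sT : ℕ} :
      Step (.Locked T sT) (.commit T sT) (.Inactive T)
  | abort {T sT : ℕ} :
      Step (.Locked T sT) (.abort T sT) (.Active (sT + 1))

/-- Reachability by zero or more steps (labels existentially quantified). -/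
inductive Reach : ObjState → ObjState → Prop where
  | refl (σ : ObjState) : Reach σ σ
  | tail {σ σ' σ'' : ObjState} (h : Reach σ σ') (ℓ : Label)
      (hs : Step σ' ℓ σ'') : Reach σ σ''

/-- A finite execution from `σ`: a list of labeled steps, each related by
`Step`, recording the label and the state after the step. -/
inductive Trace : ObjState → List (Label × ObjState) → Prop where
  | nil (σ : ObjState) : Trace σ []
  | cons {σ σ' : ObjState} {ℓ : Label} {rest : List (Label × ObjState)}
      (h : Step σ ℓ σ') (ht : Trace σ' rest) : Trace σ ((ℓ, σ') :: rest)

/-- Whether a label is a commit label. -/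
def isCommit : Label → Bool
  | .commit _ _ => true
  | _ => false

lemma inactive_trace_nil {T : ℕ} {tr : List (Label × ObjState)}
    (h : Trace (.Inactive T) tr) : tr = [] := by
  cases h with
  | nil => rfl
  | cons hs ht => cases hs

lemma count_le_one : ∀ (σ : ObjState) (tr : List (Label × ObjState)),
    Trace σ tr → (tr.countP (fun p => isCommit p.1)) ≤ 1 := by
  intro σ tr h
  induction h with
  | nil => simp
  | cons hs ht ih =>
    cases hs with
    | lock h => simpa [List.countP_cons, isCommit] using ih
    | commit =>
      have := inactive_trace_nil ht
      subst this
      simp [List.countP_cons, isCommit]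
    | abort => simpa [List.countP_cons, isCommit] using ih

/-- **Per-object consistency: no double spend.** Along any finite execution
starting from `Active s0`, at most one step carries a commit label; hence the
object cannot be committed by two (possibly distinct) transactions. -/
theorem at_most_one_commit (s0 : ℕ) (tr : List (Label × ObjState))
    (h : Trace (.Active s0) tr) :
    (tr.countP (fun p => isCommit p.1)) ≤ 1 := by
  exact count_le_one _ _ h
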